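/- Let A be a finite-dimensional algebra over a field k and e ∈ A an idempotent such that eA is a projective left eAe-module and the map Ae → Hom_{eAe}(eA, eAe) sending xe to the map ey ↦ eyxe (x, y ∈ A) is bijective. Then domdim(A) ≤ domdim(eAe) ≤ domdim(_A Ae), where domdim(_A Ae) is the dominant dimension of Ae as a left A-module. -/

import Mathlib

/-!
Statement 14: Let `A` be a finite-dimensional algebra over a field `k` and `e ∈ A` an
idempotent such that `eA` is a projective left `eAe`-module and the canonical map
`Ae → Hom_{eAe}(eA, eAe)`, `xe ↦ (ey ↦ eyxe)`, is bijective.  Then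
`domdim(A) ≤ domdim(eAe) ≤ domdim(_A Ae)`.
-/

universe u
/-- `domdimGE R n M` holds iff there is an exact sequence
`0 → M → I^0 → ⋯ → I^(n-1)` of left `R`-modules in which every `I^j` is both
projective and injective; i.e. the dominant dimension of `M` is at least `n`. -/
def domdimGE (R : Type u) [Ring R] :
    ℕ → (M : Type u) → [AddCommGroup M] → [Module R M] → Prop
  | 0, _, _, _ => True
  | (n+1), M, iM, mM =>
      letI := iM; letI := mM
      ∃ (I : Type u) (_ : AddCommGroup I) (_ : Module R I),
        Module.Projective R I ∧ Module.Injective R I ∧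
        ∃ f : M →ₗ[R] I, Function.Injective f ∧ domdimGE R n (I ⧸ LinearMap.range f)

section Corner

variable (A : Type u) [Ring A] (e : A)

/-- The additive subgroup `eAe` of `A`. -/
def cornerAddSubgroup : AddSubgroup A where
  carrier := {x | e * x * e = x}
  add_mem' := by
    intro a b ha hb
    simp only [Set.mem_setOf_eq] at *
    rw [mul_add, add_mul, ha, hb]
  zero_mem' := by simp
  neg_mem' := by
    intro a ha
    simp only [Set.mem_setOf_eq] at *
    rw [mul_neg, neg_mul, ha]

/-- The corner `eAe` of `A` at the idempotent `e`. -/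
abbrev Corner : Type u := ↥(cornerAddSubgroup A e)

lemma corner_left_mul {A : Type u} [Ring A] {e : A} (he : e * e = e) (x : Corner A e) :
    e * (x : A) = (x : A) := by
  conv_lhs => rw [← (x.2 : e * (x : A) * e = x)]
  rw [← mul_assoc, ← mul_assoc, he, (x.2 : e * (x : A) * e = x)]

lemma corner_right_mul {A : Type u} [Ring A] {e : A} (he : e * e = e) (x : Corner A e) :
    (x : A) * e = (x : A) := by
  conv_lhs => rw [← (x.2 : e * (x : A) * e = x)]
  rw [mul_assoc, he, (x.2 : e * (x : A) * e = x)]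

/-- The ring structure on the corner `eAe`, with unit `e`. -/
@[reducible] noncomputable def cornerRing (he : e * e = e) : Ring (Corner A e) := by
  letI : Mul (Corner A e) :=
    ⟨fun x y => ⟨(x : A) * (y : A), by
      show e * ((x : A) * (y : A)) * e = (x : A) * (y : A)
      rw [← mul_assoc e (x : A) (y : A), corner_left_mul he x,
        mul_assoc (x : A) (y : A) e, corner_right_mul he y]⟩⟩
  letI : One (Corner A e) := ⟨⟨e, by show e * e * e = e; rw [he, he]⟩⟩
  exact
  { (inferInstance : AddCommGroup (Corner A e)) with
    mul := (· * ·)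
    one := 1
    left_distrib := fun a b c => Subtype.ext (mul_add (a : A) (b : A) (c : A))
    right_distrib := fun a b c => Subtype.ext (add_mul (a : A) (b : A) (c : A))
    zero_mul := fun a => Subtype.ext (zero_mul (a : A))
    mul_zero := fun a => Subtype.ext (mul_zero (a : A))
    mul_assoc := fun a b c => Subtype.ext (mul_assoc (a : A) (b : A) (c : A))
    one_mul := fun a => Subtype.ext (corner_left_mul he a)
    mul_one := fun a => Subtype.ext (corner_right_mul he a) }

/-- The additive subgroup `eA` of `A`. -/
def eASubgroup : AddSubgroup A where
  carrier := {x | e * x = x}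
  add_mem' := by
    intro a b ha hb
    simp only [Set.mem_setOf_eq] at *
    rw [mul_add, ha, hb]
  zero_mem' := by simp
  neg_mem' := by
    intro a ha
    simp only [Set.mem_setOf_eq] at *
    rw [mul_neg, ha]

/-- `eA` as a type. -/
abbrev EA : Type u := ↥(eASubgroup A e)

/-- The additive subgroup `Ae` of `A`. -/
def aeSubgroup : AddSubgroup A where
  carrier := {x | x * e = x}
  add_mem' := by
    intro a b ha hb
    simp only [Set.mem_setOf_eq] at *
    rw [add_mul, ha, hb]
  zero_mem' := by simp
  neg_mem' := by
    intro a ha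
    simp only [Set.mem_setOf_eq] at *
    rw [neg_mul, ha]

/-- `Ae` as a type. -/
abbrev AE : Type u := ↥(aeSubgroup A e)

/-- `Ae` is a left `A`-module. -/
instance aeModule : Module A (AE A e) where
  smul a x := ⟨a * (x : A), by
    show a * (x : A) * e = a * (x : A)
    rw [mul_assoc, (x.2 : (x : A) * e = x)]⟩
  one_smul x := Subtype.ext (one_mul (x : A))
  mul_smul a b x := Subtype.ext (mul_assoc a b (x : A))
  smul_zero a := Subtype.ext (mul_zero a)
  smul_add a x y := Subtype.ext (mul_add a (x : A) (y : A))
  add_smul a b x := Subtype.ext (add_mul a b (x : A))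
  zero_smul x := Subtype.ext (zero_mul (x : A))

/-- `eA` is a left `eAe`-module. -/
noncomputable def eaModule (he : e * e = e) :
    letI := cornerRing A e he
    Module (Corner A e) (EA A e) := by
  letI := cornerRing A e he
  exact
  { smul := fun s x => ⟨(s : A) * (x : A), by
      show e * ((s : A) * (x : A)) = (s : A) * (x : A)
      rw [← mul_assoc, corner_left_mul he s]⟩
    one_smul := fun x => Subtype.ext (x.2 : e * (x : A) = x)
    mul_smul := fun s t x => Subtype.ext (mul_assoc (s : A) (t : A) (x : A))
    smul_zero := fun s => Subtype.ext (mul_zero (s : A))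
    smul_add := fun s x y => Subtype.ext (mul_add (s : A) (x : A) (y : A))
    add_smul := fun s t x => Subtype.ext (add_mul (s : A) (t : A) (x : A))
    zero_smul := fun x => Subtype.ext (zero_mul (x : A)) }

/-- The canonical map `Ae → Hom_{eAe}(eA, eAe)` sending `xe` to `ey ↦ eyxe`. -/
noncomputable def etaMap (he : e * e = e) :
    AE A e →
      (letI := cornerRing A e he
       letI := eaModule A e he
       (EA A e) →ₗ[Corner A e] (Corner A e)) := by
  letI := cornerRing A e he
  letI := eaModule A e he
  intro x
  exact
  { toFun := fun y => ⟨(y : A) * (x : A), by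
      show e * ((y : A) * (x : A)) * e = (y : A) * (x : A)
      rw [← mul_assoc e (y : A) (x : A), (y.2 : e * (y : A) = y),
        mul_assoc (y : A) (x : A) e, (x.2 : (x : A) * e = x)]⟩
    map_add' := fun y z => Subtype.ext (add_mul (y : A) (z : A) (x : A))
    map_smul' := fun s y => Subtype.ext (mul_assoc (s : A) (y : A) (x : A)) }

end Corner

section DomdimLemmas

variable {R : Type u} [Ring R]

lemma domdimGE_succ_iff {n : ℕ} {M : Type u} [AddCommGroup M] [Module R M] :
    domdimGE R (n+1) M ↔ ∃ (I : Type u) (_ : AddCommGroup I) (_ : Module R I),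
      Module.Projective R I ∧ Module.Injective R I ∧
      ∃ f : M →ₗ[R] I, Function.Injective f ∧ domdimGE R n (I ⧸ LinearMap.range f) :=
  Iff.rfl

lemma Module.Projective.of_subsingleton {M : Type u} [AddCommGroup M] [Module R M]
    [Subsingleton M] : Module.Projective R M :=
  ⟨⟨0, fun _ => Subsingleton.elim _ _⟩⟩

lemma Module.Injective.of_subsingleton {M : Type u} [AddCommGroup M] [Module R M]
    [Subsingleton M] : Module.Injective R M :=
  ⟨fun _ _ _ _ _ _ _ _ _ => ⟨0, fun _ => Subsingleton.elim _ _⟩⟩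

lemma domdimGE_of_subsingleton {n : ℕ} {M : Type u} [AddCommGroup M] [Module R M]
    [Subsingleton M] : domdimGE R n M := by
  induction n generalizing M with
  | zero => trivial
  | succ n ih =>
    refine ⟨M, inferInstance, inferInstance, Module.Projective.of_subsingleton,
      Module.Injective.of_subsingleton, LinearMap.id, fun a b _ => Subsingleton.elim a b, ?_⟩
    haveI : Subsingleton (M ⧸ LinearMap.range (LinearMap.id : M →ₗ[R] M)) := by
      rw [Submodule.Quotient.subsingleton_iff]
      exact LinearMap.range_id
    exact ih

lemma domdimGE_of_projinj {n : ℕ} {M : Type u} [AddCommGroup M] [Module R M]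
    (hP : Module.Projective R M) (hI : Module.Injective R M) : domdimGE R n M := by
  cases n with
  | zero => trivial
  | succ n =>
    refine ⟨M, inferInstance, inferInstance, hP, hI, LinearMap.id,
      fun a b h => h, ?_⟩
    haveI : Subsingleton (M ⧸ LinearMap.range (LinearMap.id : M →ₗ[R] M)) := by
      rw [Submodule.Quotient.subsingleton_iff]
      exact LinearMap.range_id
    exact domdimGE_of_subsingleton

lemma domdimGE_congr {n : ℕ} : ∀ {M N : Type u} [AddCommGroup M] [AddCommGroup N]
    [Module R M] [Module R N], (M ≃ₗ[R] N) → domdimGE R n M → domdimGE R n N := by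
  induction n with
  | zero => intros; trivial
  | succ n ih =>
    intro M N _ _ _ _ eqv h
    obtain ⟨I, _, _, hP, hInj, f, hf, hd⟩ := h
    refine ⟨I, _, _, hP, hInj, f ∘ₗ (eqv.symm : N →ₗ[R] M),
      hf.comp eqv.symm.injective, ?_⟩
    have hr : LinearMap.range (f ∘ₗ (eqv.symm : N →ₗ[R] M)) = LinearMap.range f := by
      rw [LinearMap.range_comp, LinearEquiv.range, Submodule.map_top]
    exact ih (Submodule.quotEquivOfEq _ _ hr.symm) hd

lemma Module.Injective.prod {M N : Type u} [AddCommGroup M] [AddCommGroup N]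
    [Module R M] [Module R N] (hM : Module.Injective R M) (hN : Module.Injective R N) :
    Module.Injective R (M × N) := by
  constructor
  intro X Y _ _ _ _ f hf g
  obtain ⟨h₁, hh₁⟩ := hM.out f hf ((LinearMap.fst R M N).comp g)
  obtain ⟨h₂, hh₂⟩ := hN.out f hf ((LinearMap.snd R M N).comp g)
  exact ⟨h₁.prod h₂, fun x => Prod.ext (hh₁ x) (hh₂ x)⟩

lemma LinearMap.range_prodMap' {M N M' N' : Type u} [AddCommGroup M] [AddCommGroup N]
    [AddCommGroup M'] [AddCommGroup N'] [Module R M] [Module R N] [Module R M'] [Module R N']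
    (f : M →ₗ[R] M') (g : N →ₗ[R] N') :
    LinearMap.range (f.prodMap g) = (LinearMap.range f).prod (LinearMap.range g) := by
  ext ⟨a, b⟩
  simp only [LinearMap.mem_range, Submodule.mem_prod, Prod.ext_iff, LinearMap.prodMap_apply]
  constructor
  · rintro ⟨⟨x, y⟩, hx, hy⟩; exact ⟨⟨x, hx⟩, ⟨y, hy⟩⟩
  · rintro ⟨⟨x, hx⟩, ⟨y, hy⟩⟩; exact ⟨(x, y), hx, hy⟩

/-- quotient of a product by a product of submodules -/
noncomputable def quotProdEquiv {M N : Type u} [AddCommGroup M] [AddCommGroup N]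
    [Module R M] [Module R N] (p : Submodule R M) (q : Submodule R N) :
    ((M × N) ⧸ (p.prod q)) ≃ₗ[R] (M ⧸ p) × (N ⧸ q) := by
  have hker : LinearMap.ker (p.mkQ.prodMap q.mkQ) = p.prod q := by
    rw [LinearMap.ker_prodMap, Submodule.ker_mkQ, Submodule.ker_mkQ]
  exact (Submodule.quotEquivOfEq _ _ hker.symm).trans
    ((p.mkQ.prodMap q.mkQ).quotKerEquivOfSurjective
      (Function.Surjective.prodMap p.mkQ_surjective q.mkQ_surjective))

lemma domdimGE_prod {n : ℕ} : ∀ {M N : Type u} [AddCommGroup M] [AddCommGroup N]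
    [Module R M] [Module R N], domdimGE R n M → domdimGE R n N → domdimGE R n (M × N) := by
  induction n with
  | zero => intros; trivial
  | succ n ih =>
    intro M N _ _ _ _ hM hN
    obtain ⟨I, _, _, hPI, hII, f, hf, hdf⟩ := hM
    obtain ⟨J, _, _, hPJ, hIJ, g, hg, hdg⟩ := hN
    refine ⟨I × J, inferInstance, inferInstance, inferInstance, hII.prod hIJ,
      f.prodMap g, fun a b h => ?_, ?_⟩
    · have := Prod.ext_iff.mp h
      exact Prod.ext (hf this.1) (hg this.2)
    · have hr := LinearMap.range_prodMap' f g
      exact domdimGE_congr ((Submodule.quotEquivOfEq _ _ hr).trans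
        (quotProdEquiv _ _)).symm (ih hdf hdg)

end DomdimLemmas

section Summand

variable {R : Type u} [Ring R]

lemma domdimGE_of_prod_left {n : ℕ} : ∀ {M N : Type u} [AddCommGroup M] [AddCommGroup N]
    [Module R M] [Module R N], domdimGE R n (M × N) → domdimGE R n M := by
  induction n with
  | zero => intros; trivial
  | succ n ih =>
    intro M N _ _ _ _ h
    obtain ⟨I, _, _, hPI, hII, f, hf, hQ⟩ := h
    let f₁ : M →ₗ[R] I := f ∘ₗ LinearMap.inl R M N
    let f₂ : N →ₗ[R] I := f ∘ₗ LinearMap.inr R M N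
    have hf₁ : Function.Injective f₁ := by
      intro a b hab
      have := hf hab
      simpa [Prod.ext_iff] using this
    have hf₂ : Function.Injective f₂ := by
      intro a b hab
      have := hf hab
      simpa [Prod.ext_iff] using this
    let v : (M × N) →ₗ[R] (I × I) := f₁.prodMap f₂
    have hv : Function.Injective v := by
      intro a b hab
      rw [Prod.ext_iff] at hab
      exact Prod.ext (hf₁ hab.1) (hf₂ hab.2)
    obtain ⟨h₀, hh₀⟩ := (hII.prod hII).out f hf v
    obtain ⟨h₁, hh₁⟩ := hII.out v hv f
    -- automorphism α of I × (I × I)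
    let Fα : (I × (I × I)) →ₗ[R] (I × (I × I)) :=
      (LinearMap.fst R I (I × I)).prod
        (LinearMap.snd R I (I × I) - h₀ ∘ₗ LinearMap.fst R I (I × I))
    let Fα' : (I × (I × I)) →ₗ[R] (I × (I × I)) :=
      (LinearMap.fst R I (I × I)).prod
        (LinearMap.snd R I (I × I) + h₀ ∘ₗ LinearMap.fst R I (I × I))
    let α : (I × (I × I)) ≃ₗ[R] (I × (I × I)) :=
      LinearEquiv.ofLinear Fα Fα'
        (by ext x <;> simp [Fα, Fα'])
        (by ext x <;> simp [Fα, Fα'])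
    let Fβ : (I × (I × I)) →ₗ[R] (I × (I × I)) :=
      (LinearMap.fst R I (I × I) - h₁ ∘ₗ LinearMap.snd R I (I × I)).prod
        (LinearMap.snd R I (I × I))
    let Fβ' : (I × (I × I)) →ₗ[R] (I × (I × I)) :=
      (LinearMap.fst R I (I × I) + h₁ ∘ₗ LinearMap.snd R I (I × I)).prod
        (LinearMap.snd R I (I × I))
    let β : (I × (I × I)) ≃ₗ[R] (I × (I × I)) :=
      LinearEquiv.ofLinear Fβ Fβ'
        (by ext x <;> simp [Fβ, Fβ'])
        (by ext x <;> simp [Fβ, Fβ'])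
    let w : (M × N) →ₗ[R] (I × (I × I)) := f.prod v
    have hαw : ∀ x, α (w x) = ((f.prod (0 : (M × N) →ₗ[R] (I × I)))) x := by
      intro x
      have h1 : h₀ (f x) = v x := hh₀ x
      show Fα (w x) = _
      simp [Fα, w, LinearMap.prod_apply, h1]
    have hβw : ∀ x, β (w x) = (((0 : (M × N) →ₗ[R] I).prod v)) x := by
      intro x
      have h1 : h₁ (v x) = f x := hh₁ x
      show Fβ (w x) = _
      simp [Fβ, w, LinearMap.prod_apply, h1]
    have hmapα : Submodule.map (α : (I × (I × I)) →ₗ[R] (I × (I × I))) (LinearMap.range w)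
        = (LinearMap.range f).prod (⊥ : Submodule R (I × I)) := by
      ext z
      simp only [Submodule.mem_map, LinearMap.mem_range, Submodule.mem_prod,
        Submodule.mem_bot]
      constructor
      · rintro ⟨y, ⟨x, rfl⟩, rfl⟩
        rw [LinearEquiv.coe_coe, hαw x]
        exact ⟨⟨x, rfl⟩, rfl⟩
      · rintro ⟨⟨x, hx⟩, hz⟩
        refine ⟨w x, ⟨x, rfl⟩, ?_⟩
        rw [LinearEquiv.coe_coe, hαw x]
        exact Prod.ext hx hz.symm
    have hmapβ : Submodule.map (β : (I × (I × I)) →ₗ[R] (I × (I × I))) (LinearMap.range w)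
        = (⊥ : Submodule R I).prod (LinearMap.range v) := by
      ext z
      simp only [Submodule.mem_map, LinearMap.mem_range, Submodule.mem_prod,
        Submodule.mem_bot]
      constructor
      · rintro ⟨y, ⟨x, rfl⟩, rfl⟩
        rw [LinearEquiv.coe_coe, hβw x]
        exact ⟨rfl, ⟨x, rfl⟩⟩
      · rintro ⟨hz, ⟨x, hx⟩⟩
        refine ⟨w x, ⟨x, rfl⟩, ?_⟩
        rw [LinearEquiv.coe_coe, hβw x]
        exact Prod.ext hz.symm hx
    -- first equivalence : coker w ≃ Q × (I × I)
    let E1 : ((I × (I × I)) ⧸ LinearMap.range w) ≃ₗ[R]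
        ((I ⧸ LinearMap.range f) × (I × I)) :=
      (Submodule.Quotient.equiv (LinearMap.range w)
          ((LinearMap.range f).prod (⊥ : Submodule R (I × I))) α hmapα).trans
        ((quotProdEquiv _ _).trans
          (LinearEquiv.prodCongr (LinearEquiv.refl R _) (Submodule.quotEquivOfEqBot _ rfl)))
    -- second equivalence : coker w ≃ I × (C₁ × C₂)
    let E2 : ((I × (I × I)) ⧸ LinearMap.range w) ≃ₗ[R]
        (I × ((I ⧸ LinearMap.range f₁) × (I ⧸ LinearMap.range f₂))) :=
      (Submodule.Quotient.equiv (LinearMap.range w)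
          ((⊥ : Submodule R I).prod (LinearMap.range v)) β hmapβ).trans
        ((quotProdEquiv _ _).trans
          (LinearEquiv.prodCongr (Submodule.quotEquivOfEqBot _ rfl)
            ((Submodule.quotEquivOfEq _ _ (LinearMap.range_prodMap' f₁ f₂)).trans
              (quotProdEquiv _ _))))
    have hIId : domdimGE R n (I × I) :=
      domdimGE_of_projinj inferInstance (hII.prod hII)
    have hE : domdimGE R n
        (I × ((I ⧸ LinearMap.range f₁) × (I ⧸ LinearMap.range f₂))) :=
      domdimGE_congr (E1.symm.trans E2) (domdimGE_prod hQ hIId)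
    have hC12 : domdimGE R n ((I ⧸ LinearMap.range f₁) × (I ⧸ LinearMap.range f₂)) :=
      ih (domdimGE_congr (LinearEquiv.prodComm R _ _) hE)
    have hC₁ : domdimGE R n (I ⧸ LinearMap.range f₁) := ih hC12
    exact ⟨I, inferInstance, inferInstance, hPI, hII, f₁, hf₁, hC₁⟩

lemma domdimGE_of_retract {n : ℕ} {M N : Type u} [AddCommGroup M] [AddCommGroup N]
    [Module R M] [Module R N] (i : N →ₗ[R] M) (p : M →ₗ[R] N) (hpi : ∀ x, p (i x) = x)
    (h : domdimGE R n M) : domdimGE R n N := by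
  have hker : ∀ m : M, p (m - i (p m)) = 0 := by
    intro m; simp [map_sub, hpi]
  let F : M →ₗ[R] N × (LinearMap.ker p) :=
    p.prod ((LinearMap.id - i ∘ₗ p).codRestrict (LinearMap.ker p) (fun m => by
      simpa using hker m))
  let G : (N × (LinearMap.ker p)) →ₗ[R] M :=
    i ∘ₗ LinearMap.fst R N (LinearMap.ker p) +
      (LinearMap.ker p).subtype ∘ₗ LinearMap.snd R N (LinearMap.ker p)
  have hGF : G ∘ₗ F = LinearMap.id := by
    apply LinearMap.ext; intro m
    simp [F, G, LinearMap.codRestrict]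
  have hFG : F ∘ₗ G = LinearMap.id := by
    apply LinearMap.ext; rintro ⟨x, ⟨y, hy⟩⟩
    rw [LinearMap.mem_ker] at hy
    apply Prod.ext
    · simp [F, G, hpi, hy]
    · apply Subtype.ext
      simp [F, G, LinearMap.codRestrict, hpi, hy]
  exact domdimGE_of_prod_left (domdimGE_congr (LinearEquiv.ofLinear F G hFG hGF) h)

end Summand

section Functors

variable (A : Type u) [Ring A] (e : A) [hfe : Fact (e * e = e)]

noncomputable local instance cornerRingI : Ring (Corner A e) := cornerRing A e hfe.out

noncomputable local instance eaModuleI : Module (Corner A e) (EA A e) := eaModule A e hfe.out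

lemma ea_smul_val (s : Corner A e) (x : EA A e) : ((s • x : EA A e) : A) = (s : A) * (x : A) :=
  rfl

lemma corner_mul_val (s t : Corner A e) : ((s * t : Corner A e) : A) = (s : A) * (t : A) := rfl

lemma corner_one_val : ((1 : Corner A e) : A) = e := rfl

/-- the `e`-part of an `A`-module, as an additive subgroup. -/
def eAddSubgroup (M : Type u) [AddCommGroup M] [Module A M] : AddSubgroup M where
  carrier := {x | e • x = x}
  add_mem' := by
    intro a b ha hb
    simp only [Set.mem_setOf_eq] at *
    rw [smul_add, ha, hb]
  zero_mem' := by simp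
  neg_mem' := by
    intro a ha
    simp only [Set.mem_setOf_eq] at *
    rw [smul_neg, ha]

abbrev EMod (M : Type u) [AddCommGroup M] [Module A M] : Type u := ↥(eAddSubgroup A e M)

noncomputable local instance emodModule (M : Type u) [AddCommGroup M] [Module A M] :
    Module (Corner A e) (EMod A e M) where
  smul s x := ⟨(s : A) • (x : M), by
    show e • ((s : A) • (x : M)) = _
    rw [← mul_smul, corner_left_mul hfe.out s]⟩
  one_smul x := Subtype.ext (by
    show ((1 : Corner A e) : A) • (x : M) = (x : M)
    exact x.2)
  mul_smul s t x := Subtype.ext (mul_smul (s : A) (t : A) (x : M))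
  smul_zero s := Subtype.ext (smul_zero (s : A))
  smul_add s x y := Subtype.ext (smul_add (s : A) (x : M) (y : M))
  add_smul s t x := Subtype.ext (add_smul (s : A) (t : A) (x : M))
  zero_smul x := Subtype.ext (zero_smul A (x : M))

lemma emod_smul_val {M : Type u} [AddCommGroup M] [Module A M] (s : Corner A e)
    (x : EMod A e M) : ((s • x : EMod A e M) : M) = (s : A) • (x : M) := rfl

/-- functoriality of `EMod` -/
noncomputable def emap {M N : Type u} [AddCommGroup M] [AddCommGroup N] [Module A M]
    [Module A N] (f : M →ₗ[A] N) : EMod A e M →ₗ[Corner A e] EMod A e N where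
  toFun x := ⟨f (x : M), by
    show e • f (x : M) = f (x : M)
    rw [← map_smul, x.2]⟩
  map_add' x y := Subtype.ext (map_add f _ _)
  map_smul' s x := Subtype.ext (map_smul f (s : A) (x : M))

lemma emap_injective {M N : Type u} [AddCommGroup M] [AddCommGroup N] [Module A M]
    [Module A N] {f : M →ₗ[A] N} (hf : Function.Injective f) :
    Function.Injective (emap A e f) := fun x y hxy =>
  Subtype.ext (hf (congrArg Subtype.val hxy))

/-- right multiplication by an element of `A` on `eA` -/
noncomputable def eaRmul (a : A) : EA A e →ₗ[Corner A e] EA A e where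
  toFun y := ⟨(y : A) * a, by
    show e * ((y : A) * a) = _
    rw [← mul_assoc, (y.2 : e * (y : A) = y)]⟩
  map_add' y z := Subtype.ext (add_mul (y : A) (z : A) a)
  map_smul' s y := Subtype.ext (mul_assoc (s : A) (y : A) a)

noncomputable local instance homModule (N : Type u) [AddCommGroup N]
    [Module (Corner A e) N] : Module A (EA A e →ₗ[Corner A e] N) where
  smul a φ := φ ∘ₗ eaRmul A e a
  one_smul φ := LinearMap.ext fun y => congrArg φ (Subtype.ext (mul_one (y : A)))
  mul_smul a b φ := LinearMap.ext fun y => congrArg φ (Subtype.ext (mul_assoc (y : A) a b).symm)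
  smul_zero a := rfl
  smul_add a φ ψ := rfl
  add_smul a b φ := LinearMap.ext fun y => by
    show φ (eaRmul A e (a + b) y) = φ (eaRmul A e a y) + φ (eaRmul A e b y)
    rw [← map_add]
    exact congrArg φ (Subtype.ext (mul_add (y : A) a b))
  zero_smul φ := LinearMap.ext fun y => by
    show φ (eaRmul A e 0 y) = 0
    have h0 : eaRmul A e 0 y = 0 := Subtype.ext (mul_zero (y : A))
    rw [h0, map_zero]

lemma homE_smul_apply {N : Type u} [AddCommGroup N] [Module (Corner A e) N] (a : A)
    (φ : EA A e →ₗ[Corner A e] N) (y : EA A e) :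
    (a • φ) y = φ (eaRmul A e a y) := rfl

lemma eaRmul_val (a : A) (y : EA A e) : ((eaRmul A e a y : EA A e) : A) = (y : A) * a := rfl

/-- functoriality of `Hom_B(eA, -)` -/
noncomputable def hmap {N N' : Type u} [AddCommGroup N] [AddCommGroup N']
    [Module (Corner A e) N] [Module (Corner A e) N'] (g : N →ₗ[Corner A e] N') :
    (EA A e →ₗ[Corner A e] N) →ₗ[A] (EA A e →ₗ[Corner A e] N') where
  toFun φ := g ∘ₗ φ
  map_add' φ ψ := LinearMap.ext fun y => map_add g _ _
  map_smul' a φ := LinearMap.ext fun y => rfl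

lemma hmap_injective {N N' : Type u} [AddCommGroup N] [AddCommGroup N']
    [Module (Corner A e) N] [Module (Corner A e) N'] {g : N →ₗ[Corner A e] N'}
    (hg : Function.Injective g) : Function.Injective (hmap A e g) := by
  intro φ ψ h
  ext y
  exact hg (LinearMap.congr_fun h y)




noncomputable def emodQuotEquiv {M I : Type u} [AddCommGroup M] [AddCommGroup I] [Module A M]
    [Module A I] (f : M →ₗ[A] I) (hf : Function.Injective f) :
    (EMod A e I ⧸ LinearMap.range (emap A e f)) ≃ₗ[Corner A e]
      EMod A e (I ⧸ LinearMap.range f) := by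
  let θ : EMod A e I →ₗ[Corner A e] EMod A e (I ⧸ LinearMap.range f) :=
    emap A e (LinearMap.range f).mkQ
  have hsurj : Function.Surjective θ := by
    intro q
    obtain ⟨y, hy⟩ := (LinearMap.range f).mkQ_surjective (q : I ⧸ LinearMap.range f)
    refine ⟨⟨e • y, ?_⟩, ?_⟩
    · show e • (e • y) = e • y
      rw [← mul_smul, hfe.out]
    · apply Subtype.ext
      show (LinearMap.range f).mkQ (e • y) = (q : I ⧸ LinearMap.range f)
      rw [map_smul, hy]
      exact q.2
  have hker : LinearMap.range (emap A e f) = LinearMap.ker θ := by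
    ext x
    simp only [LinearMap.mem_range, LinearMap.mem_ker]
    constructor
    · rintro ⟨y, rfl⟩
      apply Subtype.ext
      show (LinearMap.range f).mkQ (f (y : M)) = 0
      rw [Submodule.mkQ_apply, Submodule.Quotient.mk_eq_zero]
      exact ⟨(y : M), rfl⟩
    · intro hx
      have hx' : (LinearMap.range f).mkQ (x : I) = 0 := congrArg Subtype.val hx
      rw [Submodule.mkQ_apply, Submodule.Quotient.mk_eq_zero] at hx'
      obtain ⟨m, hm⟩ := hx'
      have hme : e • m = m := by
        apply hf
        rw [map_smul, hm]
        exact x.2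
      exact ⟨⟨m, hme⟩, Subtype.ext hm⟩
  exact (Submodule.quotEquivOfEq _ _ hker).trans (LinearMap.quotKerEquivOfSurjective θ hsurj)

noncomputable def emodFinsuppEquiv (ι : Type u) :
    EMod A e (ι →₀ A) ≃ₗ[Corner A e] (ι →₀ EA A e) := by
  have he := hfe.out
  let f0 : A → EA A e := fun a => ⟨e * a, by
    show e * (e * a) = e * a
    rw [← mul_assoc, he]⟩
  have hf00 : f0 0 = 0 := Subtype.ext (mul_zero e)
  have hf0add : ∀ a b : A, f0 (a + b) = f0 a + f0 b := fun a b => Subtype.ext (mul_add e a b)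
  have hval_mul : ∀ (ψ : EMod A e (ι →₀ A)) (i : ι), e * ((ψ : ι →₀ A) i) = (ψ : ι →₀ A) i := by
    intro ψ i
    have := DFunLike.congr_fun ψ.2 i
    rwa [Finsupp.smul_apply, smul_eq_mul] at this
  let v : EMod A e (ι →₀ A) →ₗ[Corner A e] (ι →₀ EA A e) :=
    { toFun := fun ψ => Finsupp.mapRange f0 hf00 (ψ : ι →₀ A)
      map_add' := fun ψ ψ' => by
        show Finsupp.mapRange f0 hf00 ((ψ : ι →₀ A) + (ψ' : ι →₀ A)) = _
        rw [Finsupp.mapRange_add hf0add]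
      map_smul' := fun s ψ => by
        ext i
        show e * (((s • ψ : EMod A e (ι →₀ A)) : ι →₀ A) i)
          = ((s • Finsupp.mapRange f0 hf00 (ψ : ι →₀ A)) i : A)
        have h1 : (((s • ψ : EMod A e (ι →₀ A)) : ι →₀ A) i) = (s : A) * ((ψ : ι →₀ A) i) := by
          show (((s : A) • (ψ : ι →₀ A)) i) = _
          rw [Finsupp.smul_apply, smul_eq_mul]
        have h2 : ((s • Finsupp.mapRange f0 hf00 (ψ : ι →₀ A)) i : A)
            = (s : A) * (e * ((ψ : ι →₀ A) i)) := by
          rw [Finsupp.smul_apply]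
          rfl
        rw [h1, h2, hval_mul ψ i, ← mul_assoc, corner_left_mul he s] }
  let uval : (ι →₀ EA A e) → (ι →₀ A) :=
    fun ξ => Finsupp.mapRange (Subtype.val) rfl ξ
  let u : (ι →₀ EA A e) →ₗ[Corner A e] EMod A e (ι →₀ A) :=
    { toFun := fun ξ => ⟨uval ξ, by
        show e • uval ξ = uval ξ
        ext i
        rw [Finsupp.smul_apply, smul_eq_mul, Finsupp.mapRange_apply]
        exact (ξ i).2⟩
      map_add' := fun ξ ξ' => Subtype.ext (by
        show uval (ξ + ξ') = uval ξ + uval ξ'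
        exact Finsupp.mapRange_add (fun a b => rfl) ξ ξ')
      map_smul' := fun s ξ => Subtype.ext (by
        ext i
        show ((s • ξ) i : A) = ((s : A) • uval ξ) i
        rw [Finsupp.smul_apply, Finsupp.smul_apply, smul_eq_mul, Finsupp.mapRange_apply]
        rfl) }
  refine LinearEquiv.ofLinear v u ?_ ?_
  · apply LinearMap.ext
    intro ξ
    ext i
    show e * (uval ξ i) = ((ξ i : EA A e) : A)
    rw [Finsupp.mapRange_apply]
    exact (ξ i).2
  · apply LinearMap.ext
    intro ψ
    apply Subtype.ext
    ext i
    show (uval (Finsupp.mapRange f0 hf00 (ψ : ι →₀ A)) : ι →₀ A) i = (ψ : ι →₀ A) i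
    rw [Finsupp.mapRange_apply, Finsupp.mapRange_apply]
    exact hval_mul ψ i

lemma emod_projective {I : Type u} [AddCommGroup I] [Module A I] (hP : Module.Projective A I)
    (hEA : Module.Projective (Corner A e) (EA A e)) :
    Module.Projective (Corner A e) (EMod A e I) := by
  classical
  obtain ⟨s, hs⟩ := (Module.projective_def').mp hP
  haveI := hEA
  haveI : Module.Projective (Corner A e) (I →₀ EA A e) :=
    Module.Projective.of_equiv (finsuppLequivDFinsupp (Corner A e)).symm
  haveI : Module.Projective (Corner A e) (EMod A e (I →₀ A)) :=
    Module.Projective.of_equiv (emodFinsuppEquiv A e I).symm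
  refine Module.Projective.of_split (emap A e s)
    (emap A e (Finsupp.linearCombination A id)) ?_
  apply LinearMap.ext
  intro x
  apply Subtype.ext
  show Finsupp.linearCombination A id (s (x : I)) = (x : I)
  exact LinearMap.congr_fun hs (x : I)


lemma emod_module_injective {I : Type u} [AddCommGroup I] [Module A I]
    (hI : Module.Injective A I) {m : ℕ} (x : Fin m → EA A e) (z : Fin m → AE A e)
    (h1 : ∀ v : EA A e, (v : A) = ∑ j, ((v : A) * (z j : A)) * (x j : A))
    (h2 : ∀ w : AE A e, (w : A) = ∑ j, (z j : A) * ((x j : A) * (w : A))) :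
    Module.Injective (Corner A e) (EMod A e I) := by
  classical
  have he := hfe.out
  apply Module.Baer.injective
  intro L g
  set Lset : AddSubgroup A := L.toAddSubgroup.map (cornerAddSubgroup A e).subtype with hLsetdef
  have mem_corner : ∀ {c : A}, c ∈ Lset → e * c * e = c := by
    intro c hc
    obtain ⟨b, _, rfl⟩ := AddSubgroup.mem_map.mp hc
    exact b.2
  have memL : ∀ {c : A} (hc : c ∈ Lset), (⟨c, mem_corner hc⟩ : Corner A e) ∈ L := by
    intro c hc
    obtain ⟨b, hb, hbc⟩ := AddSubgroup.mem_map.mp hc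
    have hcb : (⟨c, mem_corner hc⟩ : Corner A e) = b := Subtype.ext hbc.symm
    rw [hcb]
    exact hb
  have LmemLset : ∀ l : L, ((l : Corner A e) : A) ∈ Lset :=
    fun l => AddSubgroup.mem_map.mpr ⟨(l : Corner A e), l.2, rfl⟩
  have Lset_mul : ∀ (s : Corner A e) {c : A}, c ∈ Lset → (s : A) * c ∈ Lset := by
    intro s c hc
    refine AddSubgroup.mem_map.mpr ⟨(s • (⟨⟨c, mem_corner hc⟩, memL hc⟩ : L) : L), ?_, rfl⟩
    exact (s • (⟨⟨c, mem_corner hc⟩, memL hc⟩ : L)).2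
  -- the value function
  let gvalT : A → I := fun c =>
    if hc : c ∈ Lset then ((g ⟨⟨c, mem_corner hc⟩, memL hc⟩ : EMod A e I) : I) else 0
  have gvalT_eq : ∀ {c : A} (hc : c ∈ Lset),
      gvalT c = ((g ⟨⟨c, mem_corner hc⟩, memL hc⟩ : EMod A e I) : I) := by
    intro c hc
    simp only [gvalT, dif_pos hc]
  have gvalT_zero : gvalT 0 = 0 := by
    rw [gvalT_eq (zero_mem Lset)]
    have h0 : (⟨⟨0, mem_corner (zero_mem Lset)⟩, memL (zero_mem Lset)⟩ : L) = 0 :=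
      Subtype.ext (Subtype.ext rfl)
    rw [h0, map_zero]
    rfl
  have gvalT_add : ∀ {c c' : A}, c ∈ Lset → c' ∈ Lset →
      gvalT (c + c') = gvalT c + gvalT c' := by
    intro c c' hc hc'
    rw [gvalT_eq hc, gvalT_eq hc', gvalT_eq (add_mem hc hc')]
    have h4 : (⟨⟨c + c', mem_corner (add_mem hc hc')⟩, memL (add_mem hc hc')⟩ : L)
        = ⟨⟨c, mem_corner hc⟩, memL hc⟩ + ⟨⟨c', mem_corner hc'⟩, memL hc'⟩ :=
      Subtype.ext (Subtype.ext rfl)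
    rw [h4, map_add]
    rfl
  have gvalT_smul : ∀ (s : Corner A e) {c : A} (hc : c ∈ Lset),
      gvalT ((s : A) * c) = (s : A) • gvalT c := by
    intro s c hc
    rw [gvalT_eq hc, gvalT_eq (Lset_mul s hc)]
    have h4 : (⟨⟨(s : A) * c, mem_corner (Lset_mul s hc)⟩, memL (Lset_mul s hc)⟩ : L)
        = s • ⟨⟨c, mem_corner hc⟩, memL hc⟩ :=
      Subtype.ext (Subtype.ext rfl)
    rw [h4, map_smul]
    rfl
  have gvalT_finsum : ∀ (t : Finset (Fin m)) (f : Fin m → A), (∀ j, f j ∈ Lset) →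
      gvalT (∑ j ∈ t, f j) = ∑ j ∈ t, gvalT (f j) := by
    intro t f hf
    induction t using Finset.induction_on with
    | empty => simpa using gvalT_zero
    | insert j t hnot ih =>
      rw [Finset.sum_insert hnot, Finset.sum_insert hnot,
        gvalT_add (hf _) (sum_mem fun j _ => hf j), ih]
  -- the A-submodule of A on which the extension is defined
  let S : Submodule A A :=
    { carrier := {w | ∀ v : EA A e, (v : A) * w ∈ Lset}
      add_mem' := fun {w w'} hw hw' v => by
        rw [mul_add]
        exact add_mem (hw v) (hw' v)
      zero_mem' := fun v => by
        rw [mul_zero]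
        exact zero_mem _
      smul_mem' := fun a w hw v => by
        rw [smul_eq_mul, ← mul_assoc]
        exact hw (eaRmul A e a v) }
  -- the A-linear map on S
  have hSmem : ∀ (w : S) (v : EA A e), (v : A) * (w : A) ∈ Lset := fun w => w.2
  let gS : S →ₗ[A] I :=
    { toFun := fun w => ∑ j, (z j : A) • gvalT ((x j : A) * (w : A))
      map_add' := fun w w' => by
        rw [← Finset.sum_add_distrib]
        refine Finset.sum_congr rfl fun j _ => ?_
        have hval : ((w + w' : S) : A) = (w : A) + (w' : A) := rfl
        rw [hval, mul_add, gvalT_add (hSmem w (x j)) (hSmem w' (x j)), smul_add]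
      map_smul' := fun a w => by
        show ∑ j, (z j : A) • gvalT ((x j : A) * (a * (w : A)))
          = a • ∑ j, (z j : A) • gvalT ((x j : A) * (w : A))
        have key : ∀ j : Fin m, a • ((z j : A) • gvalT ((x j : A) * (w : A)))
            = ∑ i, (z i : A) •
                gvalT (((x i : A) * (a * (z j : A))) * ((x j : A) * (w : A))) := by
          intro j
          have haz : (a * (z j : A)) * e = a * (z j : A) := by
            rw [mul_assoc, ((z j).2 : (z j : A) * e = (z j : A))]
          have h2' := h2 ⟨a * (z j : A), haz⟩
          calc a • ((z j : A) • gvalT ((x j : A) * (w : A)))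
              = (a * (z j : A)) • gvalT ((x j : A) * (w : A)) := smul_smul _ _ _
            _ = (∑ i, (z i : A) * ((x i : A) * (a * (z j : A)))) •
                  gvalT ((x j : A) * (w : A)) := by
                exact congrArg (fun t : A => t • gvalT ((x j : A) * (w : A))) h2'
            _ = ∑ i, ((z i : A) * ((x i : A) * (a * (z j : A)))) •
                  gvalT ((x j : A) * (w : A)) := Finset.sum_smul
            _ = ∑ i, (z i : A) •
                  gvalT (((x i : A) * (a * (z j : A))) * ((x j : A) * (w : A))) := by
                refine Finset.sum_congr rfl fun i _ => ?_
                rw [mul_smul]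
                congr 1
                have hxa : e * ((x i : A) * (a * (z j : A))) * e
                    = (x i : A) * (a * (z j : A)) := by
                  rw [← mul_assoc e, ((x i).2 : e * (x i : A) = (x i : A)),
                    mul_assoc (x i : A), mul_assoc a,
                    ((z j).2 : (z j : A) * e = (z j : A))]
                exact (gvalT_smul ⟨(x i : A) * (a * (z j : A)), hxa⟩ (hSmem w (x j))).symm
        calc ∑ j, (z j : A) • gvalT ((x j : A) * (a * (w : A)))
            = ∑ i, (z i : A) • gvalT ((x i : A) * (a * (w : A))) := rfl
          _ = ∑ i, (z i : A) • gvalT (∑ j,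
                ((x i : A) * (a * (z j : A))) * ((x j : A) * (w : A))) := by
              refine Finset.sum_congr rfl fun i _ => ?_
              congr 1
              have hxia : e * ((x i : A) * a) = (x i : A) * a := by
                rw [← mul_assoc e, ((x i).2 : e * (x i : A) = (x i : A))]
              have h1' := h1 ⟨(x i : A) * a, hxia⟩
              have hsum : ∑ j, ((x i : A) * (a * (z j : A))) * ((x j : A) * (w : A))
                  = (∑ j, (((x i : A) * a) * (z j : A)) * (x j : A)) * (w : A) := by
                rw [Finset.sum_mul]
                refine Finset.sum_congr rfl fun j _ => ?_
                simp only [mul_assoc]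
              rw [hsum, ← h1', mul_assoc]
          _ = ∑ i, (z i : A) • ∑ j,
                gvalT (((x i : A) * (a * (z j : A))) * ((x j : A) * (w : A))) := by
              refine Finset.sum_congr rfl fun i _ => ?_
              congr 1
              refine gvalT_finsum _ _ fun j => ?_
              have hxa : e * ((x i : A) * (a * (z j : A))) * e
                  = (x i : A) * (a * (z j : A)) := by
                rw [← mul_assoc e, ((x i).2 : e * (x i : A) = (x i : A)),
                  mul_assoc (x i : A), mul_assoc a,
                  ((z j).2 : (z j : A) * e = (z j : A))]
              exact Lset_mul ⟨(x i : A) * (a * (z j : A)), hxa⟩ (hSmem w (x j))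
          _ = ∑ i, ∑ j, (z i : A) •
                gvalT (((x i : A) * (a * (z j : A))) * ((x j : A) * (w : A))) := by
              refine Finset.sum_congr rfl fun i _ => ?_
              exact Finset.smul_sum
          _ = ∑ j, ∑ i, (z i : A) •
                gvalT (((x i : A) * (a * (z j : A))) * ((x j : A) * (w : A))) :=
              Finset.sum_comm
          _ = ∑ j, a • ((z j : A) • gvalT ((x j : A) * (w : A))) := by
              refine Finset.sum_congr rfl fun j _ => (key j).symm
          _ = a • ∑ j, (z j : A) • gvalT ((x j : A) * (w : A)) := Finset.smul_sum.symm }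
  -- `L` is contained in `S`
  have LsubS : ∀ l : L, ((l : Corner A e) : A) ∈ S := by
    intro l v
    have hve : e * ((v : A) * e) = (v : A) * e := by
      rw [← mul_assoc, (v.2 : e * (v : A) = (v : A))]
    have hmem := Lset_mul ⟨(v : A) * e, by
      show e * ((v : A) * e) * e = (v : A) * e
      rw [hve, mul_assoc, he]⟩ (LmemLset l)
    have heq : ((v : A) * e) * ((l : Corner A e) : A) = (v : A) * ((l : Corner A e) : A) := by
      rw [mul_assoc, corner_left_mul he (l : Corner A e)]
    rwa [heq] at hmem
  -- value of gS on L
  have gSL : ∀ l : L, gS ⟨((l : Corner A e) : A), LsubS l⟩ = ((g l : EMod A e I) : I) := by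
    intro l
    have step1 : ∀ j : Fin m, gvalT ((x j : A) * ((l : Corner A e) : A))
        = ((x j : A) * e) • ((g l : EMod A e I) : I) := by
      intro j
      have hxe : e * ((x j : A) * e) * e = (x j : A) * e := by
        rw [← mul_assoc e, ((x j).2 : e * (x j : A) = (x j : A)), mul_assoc, he]
      have heq : ((x j : A) * e) * ((l : Corner A e) : A)
          = (x j : A) * ((l : Corner A e) : A) := by
        rw [mul_assoc, corner_left_mul he (l : Corner A e)]
      have := gvalT_smul ⟨(x j : A) * e, hxe⟩ (LmemLset l)
      rw [heq] at this
      rw [this]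
      congr 1
      have h5 : (⟨⟨((l : Corner A e) : A), mem_corner (LmemLset l)⟩,
          memL (LmemLset l)⟩ : L) = l := Subtype.ext (Subtype.ext rfl)
      rw [gvalT_eq (LmemLset l), h5]
    show ∑ j, (z j : A) • gvalT ((x j : A) * ((l : Corner A e) : A)) = _
    calc ∑ j, (z j : A) • gvalT ((x j : A) * ((l : Corner A e) : A))
        = ∑ j, ((z j : A) * ((x j : A) * e)) • ((g l : EMod A e I) : I) := by
          refine Finset.sum_congr rfl fun j _ => ?_
          rw [step1 j, smul_smul]
      _ = (∑ j, (z j : A) * ((x j : A) * e)) • ((g l : EMod A e I) : I) :=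
          Finset.sum_smul.symm
      _ = e • ((g l : EMod A e I) : I) := by
          have h2e := h2 ⟨e, he⟩
          exact (congrArg (fun t : A => t • ((g l : EMod A e I) : I)) h2e).symm
      _ = ((g l : EMod A e I) : I) := (g l).2
  -- extend gS to all of A using the injectivity of I
  obtain ⟨H, hH⟩ := hI.out S.subtype (Submodule.injective_subtype S) gS
  refine ⟨{ toFun := fun b => ⟨e • H (b : A), ?_⟩
            map_add' := ?_
            map_smul' := ?_ }, ?_⟩
  · show e • (e • H (b : A)) = e • H (b : A)
    rw [← mul_smul, he]
  · intro b b'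
    apply Subtype.ext
    show e • H (((b + b' : Corner A e) : A)) = e • H (b : A) + e • H (b' : A)
    have : ((b + b' : Corner A e) : A) = (b : A) + (b' : A) := rfl
    rw [this, map_add, smul_add]
  · intro s b
    apply Subtype.ext
    show e • H (((s * b : Corner A e) : A)) = (s : A) • (e • H (b : A))
    have hsb : ((s * b : Corner A e) : A) = (s : A) • (b : A) := by
      rw [smul_eq_mul]; rfl
    rw [hsb, map_smul, ← mul_smul, ← mul_smul, corner_left_mul he s,
      corner_right_mul he s]
  · intro b hb
    apply Subtype.ext
    show e • H (b : A) = ((g ⟨b, hb⟩ : EMod A e I) : I)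
    have hHb : H (b : A) = gS ⟨(b : A), LsubS ⟨b, hb⟩⟩ := by
      have := hH ⟨(b : A), LsubS ⟨b, hb⟩⟩
      rw [← this]
      rfl
    rw [hHb, gSL ⟨b, hb⟩]
    exact (g ⟨b, hb⟩).2

/-! ### etaMap lemmas -/

lemma etaMap_val (w : AE A e) (y : EA A e) :
    ((etaMap A e hfe.out w y : Corner A e) : A) = (y : A) * (w : A) := rfl

lemma etaMap_zero : etaMap A e hfe.out 0 = 0 :=
  LinearMap.ext fun y => Subtype.ext (mul_zero (y : A))

lemma etaMap_add (w w' : AE A e) :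
    etaMap A e hfe.out (w + w') = etaMap A e hfe.out w + etaMap A e hfe.out w' :=
  LinearMap.ext fun y => Subtype.ext (mul_add (y : A) (w : A) (w' : A))

lemma etaMap_smul (a : A) (w : AE A e) :
    etaMap A e hfe.out (a • w) = a • etaMap A e hfe.out w :=
  LinearMap.ext fun y => Subtype.ext (by
    show (y : A) * (a * (w : A)) = ((y : A) * a) * (w : A)
    rw [mul_assoc])

/-- the A-linear equivalence `Ae ≃ Hom_B(eA, B)` induced by `etaMap` -/
noncomputable def etaEquiv (hbij : Function.Bijective (etaMap A e hfe.out)) :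
    AE A e ≃ₗ[A] (EA A e →ₗ[Corner A e] Corner A e) :=
  LinearEquiv.ofBijective
    { toFun := etaMap A e hfe.out
      map_add' := etaMap_add A e
      map_smul' := etaMap_smul A e } hbij

/-! ### the transpose machinery -/

/-- multiplication `eA × M → eM` -/
noncomputable def emul {X : Type u} [AddCommGroup X] [Module A X] (v : EA A e) (yy : X) :
    EMod A e X := ⟨(v : A) • yy, by
  show e • ((v : A) • yy) = (v : A) • yy
  rw [← mul_smul, (v.2 : e * (v : A) = (v : A))]⟩

lemma emul_add_left {X : Type u} [AddCommGroup X] [Module A X] (v v' : EA A e) (yy : X) :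
    emul A e (v + v') yy = emul A e v yy + emul A e v' yy :=
  Subtype.ext (add_smul (v : A) (v' : A) yy)

lemma emul_smul_left {X : Type u} [AddCommGroup X] [Module A X] (s : Corner A e)
    (v : EA A e) (yy : X) : emul A e (s • v) yy = s • emul A e v yy :=
  Subtype.ext (mul_smul (s : A) (v : A) yy)

lemma emul_add_right {X : Type u} [AddCommGroup X] [Module A X] (v : EA A e) (yy yy' : X) :
    emul A e v (yy + yy') = emul A e v yy + emul A e v yy' :=
  Subtype.ext (smul_add (v : A) yy yy')

lemma emul_smul_right {X : Type u} [AddCommGroup X] [Module A X] (v : EA A e) (a : A)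
    (yy : X) : emul A e v (a • yy) = emul A e (eaRmul A e a v) yy :=
  Subtype.ext (mul_smul (v : A) a yy).symm

lemma emul_map {X Y : Type u} [AddCommGroup X] [AddCommGroup Y] [Module A X] [Module A Y]
    (j : X →ₗ[A] Y) (v : EA A e) (xx : X) :
    emul A e v (j xx) = emap A e j (emul A e v xx) :=
  Subtype.ext (map_smul j (v : A) xx).symm

lemma homE_module_injective {I : Type u} [AddCommGroup I] [Module (Corner A e) I]
    (hI : Module.Injective (Corner A e) I) :
    Module.Injective A (EA A e →ₗ[Corner A e] I) := by
  constructor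
  intro X Y _ _ _ _ j hj g
  let eE : EA A e := ⟨e, hfe.out⟩
  -- transpose of g
  let ψ : EMod A e X →ₗ[Corner A e] I :=
    { toFun := fun p => g (p : X) eE
      map_add' := fun p q => by
        show g ((p + q : EMod A e X) : X) eE = g (p : X) eE + g (q : X) eE
        have : ((p + q : EMod A e X) : X) = (p : X) + (q : X) := rfl
        rw [this, map_add]
        rfl
      map_smul' := fun s p => by
        show g ((s • p : EMod A e X) : X) eE = s • (g (p : X) eE)
        have h1 : ((s • p : EMod A e X) : X) = (s : A) • (p : X) := rfl
        rw [h1, map_smul, homE_smul_apply A e]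
        have h2 : eaRmul A e (s : A) eE = s • eE := by
          apply Subtype.ext
          show e * (s : A) = (s : A) * e
          rw [corner_left_mul hfe.out s, corner_right_mul hfe.out s]
        rw [h2, map_smul] }
  obtain ⟨ψ', hψ'⟩ := hI.out (emap A e j) (emap_injective A e hj) ψ
  let g' : Y →ₗ[A] (EA A e →ₗ[Corner A e] I) :=
    { toFun := fun yy =>
        { toFun := fun v => ψ' (emul A e v yy)
          map_add' := fun v v' => by
            show ψ' (emul A e (v + v') yy) = ψ' (emul A e v yy) + ψ' (emul A e v' yy)
            rw [emul_add_left, map_add]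
          map_smul' := fun s v => by
            show ψ' (emul A e (s • v) yy) = s • ψ' (emul A e v yy)
            rw [emul_smul_left, map_smul] }
      map_add' := fun yy yy' => by
        apply LinearMap.ext
        intro v
        show ψ' (emul A e v (yy + yy')) = ψ' (emul A e v yy) + ψ' (emul A e v yy')
        rw [emul_add_right, map_add]
      map_smul' := fun a yy => by
        apply LinearMap.ext
        intro v
        show ψ' (emul A e v (a • yy)) = ψ' (emul A e (eaRmul A e a v) yy)
        rw [emul_smul_right] }
  refine ⟨g', fun xx => ?_⟩
  apply LinearMap.ext
  intro v
  show ψ' (emul A e v (j xx)) = g xx v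
  rw [emul_map, hψ']
  show g ((v : A) • xx) eE = g xx v
  rw [map_smul, homE_smul_apply A e]
  congr 1
  apply Subtype.ext
  show e * (v : A) = (v : A)
  exact v.2

/-! ### quotients and the functor `Hom_B(eA, -)` -/

noncomputable def homQuotEquiv {N I : Type u} [AddCommGroup N] [AddCommGroup I]
    [Module (Corner A e) N] [Module (Corner A e) I] (f : N →ₗ[Corner A e] I)
    (hf : Function.Injective f) (hEA : Module.Projective (Corner A e) (EA A e)) :
    ((EA A e →ₗ[Corner A e] I) ⧸ LinearMap.range (hmap A e f)) ≃ₗ[A]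
      (EA A e →ₗ[Corner A e] (I ⧸ LinearMap.range f)) := by
  haveI := hEA
  let θ : (EA A e →ₗ[Corner A e] I) →ₗ[A] (EA A e →ₗ[Corner A e] (I ⧸ LinearMap.range f)) :=
    hmap A e (LinearMap.range f).mkQ
  have hsurj : Function.Surjective θ := by
    intro ψ
    obtain ⟨φ, hφ⟩ := Module.projective_lifting_property (LinearMap.range f).mkQ ψ
      (LinearMap.range f).mkQ_surjective
    exact ⟨φ, hφ⟩
  have hker : LinearMap.range (hmap A e f) = LinearMap.ker θ := by
    ext φ
    simp only [LinearMap.mem_range, LinearMap.mem_ker]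
    constructor
    · rintro ⟨φ', rfl⟩
      apply LinearMap.ext
      intro v
      show (LinearMap.range f).mkQ (f (φ' v)) = 0
      rw [Submodule.mkQ_apply, Submodule.Quotient.mk_eq_zero]
      exact ⟨φ' v, rfl⟩
    · intro hφ
      have hmem : ∀ v, φ v ∈ LinearMap.range f := by
        intro v
        have h5 : (LinearMap.range f).mkQ (φ v) = 0 := LinearMap.congr_fun hφ v
        rw [Submodule.mkQ_apply] at h5
        exact (Submodule.Quotient.mk_eq_zero _).mp h5
      let eqv := LinearEquiv.ofInjective f hf
      refine ⟨eqv.symm.toLinearMap ∘ₗ (LinearMap.codRestrict (LinearMap.range f) φ hmem), ?_⟩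
      apply LinearMap.ext
      intro v
      show f (eqv.symm (LinearMap.codRestrict (LinearMap.range f) φ hmem v)) = φ v
      have h7 : ∀ w : LinearMap.range f, f (eqv.symm w) = (w : I) := by
        intro w
        have h6 := congrArg (Subtype.val) (eqv.apply_symm_apply w)
        rwa [LinearEquiv.ofInjective_apply] at h6
      exact h7 _
  exact (Submodule.quotEquivOfEq _ _ hker).trans (LinearMap.quotKerEquivOfSurjective θ hsurj)

/-! ### projectivity of `Ae` -/

lemma ae_projective : Module.Projective A (AE A e) := by
  have he := hfe.out
  refine Module.Projective.of_split
    ({ toFun := fun w => (w : A)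
       map_add' := fun w w' => rfl
       map_smul' := fun a w => rfl } : AE A e →ₗ[A] A)
    ({ toFun := fun a => ⟨a * e, by
         show (a * e) * e = a * e
         rw [mul_assoc, he]⟩
       map_add' := fun a a' => Subtype.ext (add_mul a a' e)
       map_smul' := fun a a' => Subtype.ext (by
         show (a • a') * e = a • (a' * e)
         rw [smul_eq_mul, smul_eq_mul, mul_assoc] ) } : A →ₗ[A] AE A e) ?_
  apply LinearMap.ext
  intro w
  exact Subtype.ext (w.2 : (w : A) * e = (w : A))

lemma homE_module_projective {I : Type u} [AddCommGroup I] [Module (Corner A e) I]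
    (hP : Module.Projective (Corner A e) I)
    (hbij : Function.Bijective (etaMap A e hfe.out)) {m : ℕ} (x : Fin m → EA A e)
    (z : Fin m → AE A e)
    (h1 : ∀ v : EA A e, (v : A) = ∑ j, ((v : A) * (z j : A)) * (x j : A)) :
    Module.Projective A (EA A e →ₗ[Corner A e] I) := by
  classical
  have hbz : ∀ (v : EA A e) (j : Fin m),
      e * ((v : A) * (z j : A)) * e = (v : A) * (z j : A) := by
    intro v j
    rw [← mul_assoc e, (v.2 : e * (v : A) = (v : A)), mul_assoc,
      ((z j).2 : (z j : A) * e = (z j : A))]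
  have hexpand : ∀ v : EA A e,
      v = ∑ j, (⟨(v : A) * (z j : A), hbz v j⟩ : Corner A e) • x j := by
    intro v
    apply Subtype.ext
    rw [AddSubmonoidClass.coe_finset_sum]
    exact h1 v
  have hzero0 : ∀ (y : EA A e), etaMap A e hfe.out (0 : AE A e) y = 0 := by
    intro y
    rw [etaMap_zero A e]
    rfl
  -- the comparison map
  let u : (I →₀ AE A e) →ₗ[A] (EA A e →ₗ[Corner A e] (I →₀ Corner A e)) :=
    { toFun := fun ξ =>
        { toFun := fun y => ξ.sum fun i wz => Finsupp.single i (etaMap A e hfe.out wz y)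
          map_add' := fun y y' => by
            show (ξ.sum fun i wz => Finsupp.single i (etaMap A e hfe.out wz (y + y'))) = _
            simp only [Finsupp.sum]
            rw [← Finset.sum_add_distrib]
            refine Finset.sum_congr rfl fun i _ => ?_
            rw [map_add, Finsupp.single_add]
          map_smul' := fun s y => by
            show (ξ.sum fun i wz => Finsupp.single i (etaMap A e hfe.out wz (s • y)))
              = s • (ξ.sum fun i wz => Finsupp.single i (etaMap A e hfe.out wz y))
            rw [Finsupp.smul_sum]
            simp only [Finsupp.sum]
            refine Finset.sum_congr rfl fun i _ => ?_
            rw [map_smul, Finsupp.smul_single] }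
      map_add' := fun ξ ξ' => by
        apply LinearMap.ext
        intro y
        show ((ξ + ξ').sum fun i wz => Finsupp.single i (etaMap A e hfe.out wz y)) = _
        rw [Finsupp.sum_add_index' (fun i => by rw [hzero0 y, Finsupp.single_zero])
          (fun i w1 w2 => by rw [etaMap_add A e, LinearMap.add_apply, Finsupp.single_add])]
        rfl
      map_smul' := fun a ξ => by
        apply LinearMap.ext
        intro y
        show ((a • ξ).sum fun i wz => Finsupp.single i (etaMap A e hfe.out wz y)) = _
        rw [Finsupp.sum_smul_index' (fun i => by rw [hzero0 y, Finsupp.single_zero])]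
        show (ξ.sum fun i wz => Finsupp.single i (etaMap A e hfe.out (a • wz) y))
          = (ξ.sum fun i wz => Finsupp.single i (etaMap A e hfe.out wz (eaRmul A e a y)))
        refine Finset.sum_congr rfl fun i _ => ?_
        dsimp only
        rw [etaMap_smul A e, homE_smul_apply A e] }
  have sum_single_apply : ∀ (ξ : I →₀ AE A e) (c : I → AE A e → Corner A e)
      (_ : ∀ i, c i 0 = 0) (i₀ : I),
      (ξ.sum fun i wz => Finsupp.single i (c i wz)) i₀ = c i₀ (ξ i₀) := by
    intro ξ c h0 i₀
    rw [Finsupp.sum_apply, Finsupp.sum,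
      Finset.sum_eq_single i₀ (fun b _ hb => Finsupp.single_eq_of_ne' hb)
        (fun hni => by
          rw [Finsupp.notMem_support_iff.mp hni, h0, Finsupp.single_zero]
          rfl),
      Finsupp.single_eq_same]
  have huinj : Function.Injective u := by
    intro ξ ξ' hee
    apply Finsupp.ext
    intro i
    apply hbij.injective
    apply LinearMap.ext
    intro y
    have h11 : (ξ.sum fun i' wz => Finsupp.single i' (etaMap A e hfe.out wz y)) i
        = (ξ'.sum fun i' wz => Finsupp.single i' (etaMap A e hfe.out wz y)) i :=
      DFunLike.congr_fun (LinearMap.congr_fun hee y) i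
    rwa [sum_single_apply ξ _ (fun i' => hzero0 y) i,
      sum_single_apply ξ' _ (fun i' => hzero0 y) i] at h11
  have husurj : Function.Surjective u := by
    intro φ
    have hchoose : ∀ i : I, ∃ w : AE A e,
        etaMap A e hfe.out w = (Finsupp.lapply i : (I →₀ Corner A e) →ₗ[Corner A e] _) ∘ₗ φ :=
      fun i => hbij.surjective _
    choose wfun hwfun using hchoose
    let T : Finset I := Finset.univ.biUnion fun j : Fin m => (φ (x j)).support
    have hTw : ∀ i ∉ T, wfun i = 0 := by
      intro i hi
      have hphi : ∀ j, (φ (x j)) i = 0 := by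
        intro j
        by_contra hne
        exact hi (Finset.mem_biUnion.mpr ⟨j, Finset.mem_univ j, Finsupp.mem_support_iff.mpr hne⟩)
      apply hbij.injective
      rw [hwfun i, etaMap_zero A e]
      apply LinearMap.ext
      intro v
      show (φ v) i = 0
      rw [hexpand v, map_sum, Finsupp.finset_sum_apply]
      apply Finset.sum_eq_zero
      intro j _
      rw [map_smul, Finsupp.smul_apply, hphi j, smul_zero]
    have hfin : (Function.support wfun).Finite := by
      refine Set.Finite.subset T.finite_toSet ?_
      intro i hi
      rw [Function.mem_support] at hi
      by_contra hni
      exact hi (hTw i hni)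
    refine ⟨Finsupp.ofSupportFinite wfun hfin, ?_⟩
    apply LinearMap.ext
    intro y
    apply Finsupp.ext
    intro i
    have h12 : (u (Finsupp.ofSupportFinite wfun hfin)) y i
        = etaMap A e hfe.out ((Finsupp.ofSupportFinite wfun hfin) i) y :=
      sum_single_apply _ _ (fun i' => hzero0 y) i
    rw [h12]
    have h13 : (Finsupp.ofSupportFinite wfun hfin) i = wfun i :=
      congrFun (Finsupp.ofSupportFinite_coe) i
    rw [h13]
    exact LinearMap.congr_fun (hwfun i) y
  obtain ⟨s, hs⟩ := (Module.projective_def').mp hP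
  haveI := ae_projective A e
  haveI : Module.Projective A (I →₀ AE A e) :=
    Module.Projective.of_equiv (finsuppLequivDFinsupp A).symm
  haveI : Module.Projective A (EA A e →ₗ[Corner A e] (I →₀ Corner A e)) :=
    Module.Projective.of_equiv (LinearEquiv.ofBijective u ⟨huinj, husurj⟩)
  refine Module.Projective.of_split (hmap A e s)
    (hmap A e (Finsupp.linearCombination (Corner A e) id)) ?_
  apply LinearMap.ext
  intro φ
  apply LinearMap.ext
  intro y
  show Finsupp.linearCombination (Corner A e) id (s (φ y)) = φ y
  exact LinearMap.congr_fun hs (φ y)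

/-! ### assembly -/

lemma part1_general (hEA : Module.Projective (Corner A e) (EA A e)) {m : ℕ}
    (x : Fin m → EA A e) (z : Fin m → AE A e)
    (h1 : ∀ v : EA A e, (v : A) = ∑ j, ((v : A) * (z j : A)) * (x j : A))
    (h2 : ∀ w : AE A e, (w : A) = ∑ j, (z j : A) * ((x j : A) * (w : A))) :
    ∀ (n : ℕ) {M : Type u} [AddCommGroup M] [Module A M],
      domdimGE A n M → domdimGE (Corner A e) n (EMod A e M) := by
  intro n
  induction n with
  | zero => intros; trivial
  | succ n ih =>
    intro M _ _ h
    obtain ⟨I, _, _, hPI, hII, f, hf, hQ⟩ := h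
    refine ⟨EMod A e I, inferInstance, inferInstance, emod_projective A e hPI hEA,
      emod_module_injective A e hII x z h1 h2, emap A e f, emap_injective A e hf, ?_⟩
    exact domdimGE_congr (emodQuotEquiv A e f hf).symm (ih hQ)

lemma part2_general (hEA : Module.Projective (Corner A e) (EA A e))
    (hbij : Function.Bijective (etaMap A e hfe.out)) {m : ℕ}
    (x : Fin m → EA A e) (z : Fin m → AE A e)
    (h1 : ∀ v : EA A e, (v : A) = ∑ j, ((v : A) * (z j : A)) * (x j : A)) :
    ∀ (n : ℕ) {N : Type u} [AddCommGroup N] [Module (Corner A e) N],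
      domdimGE (Corner A e) n N → domdimGE A n (EA A e →ₗ[Corner A e] N) := by
  intro n
  induction n with
  | zero => intros; trivial
  | succ n ih =>
    intro N _ _ h
    obtain ⟨I, _, _, hPI, hII, f, hf, hQ⟩ := h
    refine ⟨EA A e →ₗ[Corner A e] I, inferInstance, inferInstance,
      homE_module_projective A e hPI hbij x z h1, homE_module_injective A e hII,
      hmap A e f, hmap_injective A e hf, ?_⟩
    exact domdimGE_congr (homQuotEquiv A e f hf hEA).symm (ih hQ)

lemma part1_final (hEA : Module.Projective (Corner A e) (EA A e)) {m : ℕ}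
    (x : Fin m → EA A e) (z : Fin m → AE A e)
    (h1 : ∀ v : EA A e, (v : A) = ∑ j, ((v : A) * (z j : A)) * (x j : A))
    (h2 : ∀ w : AE A e, (w : A) = ∑ j, (z j : A) * ((x j : A) * (w : A)))
    (n : ℕ) (h : domdimGE A n A) : domdimGE (Corner A e) n (Corner A e) := by
  have he := hfe.out
  have hd : domdimGE (Corner A e) n (EMod A e A) := part1_general A e hEA x z h1 h2 n h
  -- EMod A e A ≃ EA A e
  let eqv : EMod A e A ≃ₗ[Corner A e] EA A e :=
    { toFun := fun p => ⟨(p : A), by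
        show e * (p : A) = (p : A)
        have hp : e • (p : A) = (p : A) := p.2
        rwa [smul_eq_mul] at hp⟩
      invFun := fun v => ⟨(v : A), by
        show e • (v : A) = (v : A)
        rw [smul_eq_mul]
        exact v.2⟩
      left_inv := fun p => Subtype.ext rfl
      right_inv := fun v => Subtype.ext rfl
      map_add' := fun p q => Subtype.ext rfl
      map_smul' := fun s p => Subtype.ext (by
        show (s : A) • (p : A) = (s : A) * (p : A)
        rw [smul_eq_mul]) }
  have hd2 : domdimGE (Corner A e) n (EA A e) := domdimGE_congr eqv hd
  -- Corner is a retract of EA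
  refine domdimGE_of_retract
    ({ toFun := fun sb => ⟨(sb : A), corner_left_mul he sb⟩
       map_add' := fun s t => Subtype.ext rfl
       map_smul' := fun s t => Subtype.ext rfl } :
        Corner A e →ₗ[Corner A e] EA A e)
    ({ toFun := fun v => ⟨(v : A) * e, by
         show e * ((v : A) * e) * e = (v : A) * e
         rw [← mul_assoc e, (v.2 : e * (v : A) = (v : A)), mul_assoc, he]⟩
       map_add' := fun v v' => Subtype.ext (add_mul (v : A) (v' : A) e)
       map_smul' := fun s v => Subtype.ext (mul_assoc (s : A) (v : A) e) } :
        EA A e →ₗ[Corner A e] Corner A e)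
    (fun sb => Subtype.ext (corner_right_mul he sb)) hd2

lemma part2_final (hEA : Module.Projective (Corner A e) (EA A e))
    (hbij : Function.Bijective (etaMap A e hfe.out)) {m : ℕ}
    (x : Fin m → EA A e) (z : Fin m → AE A e)
    (h1 : ∀ v : EA A e, (v : A) = ∑ j, ((v : A) * (z j : A)) * (x j : A))
    (n : ℕ) (h : domdimGE (Corner A e) n (Corner A e)) : domdimGE A n (AE A e) := by
  have hd : domdimGE A n (EA A e →ₗ[Corner A e] Corner A e) :=
    part2_general A e hEA hbij x z h1 n h
  exact domdimGE_congr (etaEquiv A e hbij).symm hd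

lemma exists_dual_basis (k : Type u) [Field k] [Algebra k A] [FiniteDimensional k A]
    (hEA : Module.Projective (Corner A e) (EA A e))
    (hbij : Function.Bijective (etaMap A e hfe.out)) :
    ∃ (m : ℕ) (x : Fin m → EA A e) (z : Fin m → AE A e),
      (∀ v : EA A e, (v : A) = ∑ j, ((v : A) * (z j : A)) * (x j : A)) ∧
      (∀ w : AE A e, (w : A) = ∑ j, (z j : A) * ((x j : A) * (w : A))) := by
  classical
  have he := hfe.out
  obtain ⟨mm, s, hspan⟩ := Module.Finite.exists_fin (R := k) (M := A)
  let w : Fin mm → EA A e := fun j => ⟨e * s j, by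
    show e * (e * s j) = e * s j
    rw [← mul_assoc, he]⟩
  let p : (Fin mm → Corner A e) →ₗ[Corner A e] EA A e :=
    { toFun := fun c => ∑ j, c j • w j
      map_add' := fun c c' => by
        rw [← Finset.sum_add_distrib]
        refine Finset.sum_congr rfl fun j _ => ?_
        rw [Pi.add_apply, add_smul]
      map_smul' := fun t c => by
        show (∑ j, (t • c) j • w j) = t • ∑ j, c j • w j
        rw [Finset.smul_sum]
        refine Finset.sum_congr rfl fun j _ => ?_
        rw [Pi.smul_apply, smul_eq_mul, mul_smul] }
  have hpsurj : Function.Surjective p := by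
    intro v
    have hv : (v : A) ∈ Submodule.span k (Set.range s) := by
      rw [hspan]
      exact Submodule.mem_top
    obtain ⟨c, hc⟩ := (Submodule.mem_span_range_iff_exists_fun k).mp hv
    refine ⟨fun j => ⟨c j • e, by
      show e * (c j • e) * e = c j • e
      rw [mul_smul_comm, smul_mul_assoc, he, he]⟩, ?_⟩
    apply Subtype.ext
    show ((∑ j, (⟨c j • e, _⟩ : Corner A e) • w j : EA A e) : A) = (v : A)
    rw [AddSubmonoidClass.coe_finset_sum]
    have hterm : ∀ j : Fin mm,
        (((⟨c j • e, by
          show e * (c j • e) * e = c j • e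
          rw [mul_smul_comm, smul_mul_assoc, he, he]⟩ : Corner A e)
          • w j : EA A e) : A) = e * (c j • s j) := by
      intro j
      show (c j • e) * (e * s j) = e * (c j • s j)
      rw [smul_mul_assoc, ← mul_assoc, he, mul_smul_comm]
    rw [Finset.sum_congr rfl fun j _ => hterm j, ← Finset.mul_sum, hc]
    exact v.2
  haveI := hEA
  obtain ⟨σ, hσ⟩ := Module.projective_lifting_property p LinearMap.id hpsurj
  have hzf : ∀ j : Fin mm, ∃ zj : AE A e,
      etaMap A e hfe.out zj = (LinearMap.proj j : (Fin mm → Corner A e) →ₗ[Corner A e] _) ∘ₗ σ :=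
    fun j => hbij.surjective _
  choose zf hzfs using hzf
  have h1 : ∀ v : EA A e, (v : A) = ∑ j, ((v : A) * (zf j : A)) * (w j : A) := by
    intro v
    have hpv : p (σ v) = v := LinearMap.congr_fun hσ v
    have hval : ((p (σ v) : EA A e) : A) = ∑ j, ((σ v j : Corner A e) : A) * (w j : A) := by
      show ((∑ j, σ v j • w j : EA A e) : A) = _
      rw [AddSubmonoidClass.coe_finset_sum]
      rfl
    have hcoef : ∀ j, ((σ v j : Corner A e) : A) = (v : A) * (zf j : A) := by
      intro j
      have h4 := LinearMap.congr_fun (hzfs j) v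
      have h5 := congrArg (fun t : Corner A e => (t : A)) h4
      exact h5.symm
    calc (v : A) = ((p (σ v) : EA A e) : A) := (congrArg Subtype.val hpv).symm
      _ = ∑ j, ((σ v j : Corner A e) : A) * (w j : A) := hval
      _ = ∑ j, ((v : A) * (zf j : A)) * (w j : A) :=
          Finset.sum_congr rfl fun j _ => by rw [hcoef j]
  have h2 : ∀ ww : AE A e, (ww : A) = ∑ j, (zf j : A) * ((w j : A) * (ww : A)) := by
    intro ww
    have hmem : ∀ j : Fin mm, ((zf j : A) * ((w j : A) * (ww : A))) * e
        = (zf j : A) * ((w j : A) * (ww : A)) := by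
      intro j
      rw [mul_assoc (zf j : A), mul_assoc (w j : A), ((ww.2 : (ww : A) * e = (ww : A)))]
    let SW : AE A e := ∑ j, (⟨(zf j : A) * ((w j : A) * (ww : A)), hmem j⟩ : AE A e)
    have hSW : ww = SW := by
      apply hbij.injective
      apply LinearMap.ext
      intro v
      apply Subtype.ext
      show (v : A) * (ww : A) = (v : A) * (SW : A)
      have hSWval : (SW : A) = ∑ j, (zf j : A) * ((w j : A) * (ww : A)) := by
        show ((∑ j, (⟨(zf j : A) * ((w j : A) * (ww : A)), hmem j⟩ : AE A e) : AE A e) : A) = _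
        rw [AddSubmonoidClass.coe_finset_sum]
      rw [hSWval, Finset.mul_sum]
      have hterm : ∀ j : Fin mm, (v : A) * ((zf j : A) * ((w j : A) * (ww : A)))
          = (((v : A) * (zf j : A)) * (w j : A)) * (ww : A) := by
        intro j
        simp only [mul_assoc]
      rw [Finset.sum_congr rfl fun j _ => hterm j, ← Finset.sum_mul, ← h1 v]
    calc (ww : A) = (SW : A) := congrArg Subtype.val hSW
      _ = ∑ j, (zf j : A) * ((w j : A) * (ww : A)) := by
          show ((∑ j, (⟨(zf j : A) * ((w j : A) * (ww : A)), hmem j⟩ : AE A e) : AE A e) : A) = _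
          rw [AddSubmonoidClass.coe_finset_sum]
  exact ⟨mm, w, zf, h1, h2⟩

end Functors

theorem stmt14 (k : Type u) [Field k] (A : Type u) [Ring A] [Algebra k A]
    [FiniteDimensional k A] (e : A) (he : e * e = e)
    (hproj :
      letI := cornerRing A e he
      letI := eaModule A e he
      Module.Projective (Corner A e) (EA A e))
    (hbij : Function.Bijective (etaMap A e he)) :
    (∀ n : ℕ,
      domdimGE A n A →
        (letI := cornerRing A e he
         domdimGE (Corner A e) n (Corner A e))) ∧
    (∀ n : ℕ,
      (letI := cornerRing A e he
       domdimGE (Corner A e) n (Corner A e)) →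
        domdimGE A n (AE A e)) := by
  haveI hf : Fact (e * e = e) := ⟨he⟩
  letI : Ring (Corner A e) := cornerRing A e he
  letI : Module (Corner A e) (EA A e) := eaModule A e he
  have hEA : Module.Projective (Corner A e) (EA A e) := hproj
  have hbij' : Function.Bijective (etaMap A e hf.out) := hbij
  obtain ⟨m, x, z, h1, h2⟩ := exists_dual_basis A e k hEA hbij'
  exact ⟨fun n h => part1_final A e hEA x z h1 h2 n h,
    fun n h => part2_final A e hEA hbij' x z h1 n h⟩
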